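/- For every α ∈ 𝕀, the dyadic matrix v_α coincides with the dual basis vector defined through H⁻¹; that is, v_α = Σ_{β ∈ 𝕀} [H⁻¹]_{α,β} · w_β. -/

import Mathlib

open Matrix

/-- The index set 𝕀 = {(i,j) : 1 ≤ i < j ≤ n}, realized as ordered pairs of `Fin n`. -/
abbrev Idx (n : ℕ) := {p : Fin n × Fin n // p.1 < p.2}

/-- The basis matrix `w_{i,j} = e_{i,i} + e_{j,j} - e_{i,j} - e_{j,i}`. -/
noncomputable def w {n : ℕ} (α : Idx n) : Matrix (Fin n) (Fin n) ℝ :=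
  Matrix.single α.1.1 α.1.1 1 + Matrix.single α.1.2 α.1.2 1
    - Matrix.single α.1.1 α.1.2 1 - Matrix.single α.1.2 α.1.1 1

/-- The inner product matrix `H` with entries `H_{α,β} = ⟨w_α, w_β⟩ = trace(w_αᵀ w_β)`. -/
noncomputable def H (n : ℕ) : Matrix (Idx n) (Idx n) ℝ :=
  Matrix.of fun α β => ((w α)ᵀ * w β).trace

/-- The centering matrix `J = I - (1/n) 𝟙𝟙ᵀ`. -/
noncomputable def Jmat (n : ℕ) : Matrix (Fin n) (Fin n) ℝ :=
  1 - (n : ℝ)⁻¹ • Matrix.of (fun _ _ => (1 : ℝ))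

/-- The `i`-th column of the centering matrix, i.e. `J eᵢ`. -/
noncomputable def Jcol (n : ℕ) (i : Fin n) : Fin n → ℝ := fun x => Jmat n x i

/-- The dual basis matrix `v_{i,j} = -(1/2)(a bᵀ + b aᵀ)` with `a = J eᵢ`, `b = J eⱼ`. -/
noncomputable def v {n : ℕ} (α : Idx n) : Matrix (Fin n) (Fin n) ℝ :=
  (-(1 / 2) : ℝ) • (vecMulVec (Jcol n α.1.1) (Jcol n α.1.2)
    + vecMulVec (Jcol n α.1.2) (Jcol n α.1.1))

section Aux

variable {n : ℕ}

lemma Jcol_apply (i x : Fin n) : Jcol n i x = (if x = i then 1 else 0) - (n:ℝ)⁻¹ := by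
  simp [Jcol, Jmat, one_apply]

lemma Jcol_sum (hn : n ≠ 0) (i : Fin n) : ∑ x, Jcol n i x = 0 := by
  simp [Jcol_apply, Finset.sum_sub_distrib, Finset.card_univ]
  field_simp
  simp

lemma v_apply (α : Idx n) (x y : Fin n) :
    v α x y = -(1/2) * (Jcol n α.1.1 x * Jcol n α.1.2 y + Jcol n α.1.2 x * Jcol n α.1.1 y) := by
  simp [v, vecMulVec_apply]

lemma v_symm (α : Idx n) (x y : Fin n) : v α x y = v α y x := by
  simp [v_apply]; ring

lemma v_rowsum (hn : n ≠ 0) (α : Idx n) (x : Fin n) : ∑ y, v α x y = 0 := by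
  have h1 := Jcol_sum hn α.1.1
  have h2 := Jcol_sum hn α.1.2
  simp only [v_apply, mul_add, Finset.sum_add_distrib, ← Finset.mul_sum, h1, h2]
  ring

lemma sum_Idx (F : Fin n → Fin n → ℝ) :
    ∑ β : Idx n, F β.1.1 β.1.2 = ∑ k : Fin n, ∑ l : Fin n, if k < l then F k l else 0 := by
  rw [show (∑ k : Fin n, ∑ l : Fin n, if k < l then F k l else 0)
      = ∑ p : Fin n × Fin n, if p.1 < p.2 then F p.1 p.2 else 0 from
      (Fintype.sum_prod_type (fun p : Fin n × Fin n => if p.1 < p.2 then F p.1 p.2 else 0)).symm,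
    ← Finset.sum_filter]
  exact (Finset.sum_subtype (Finset.univ.filter fun p : Fin n × Fin n => p.1 < p.2)
    (fun x => by simp) (fun p => F p.1 p.2)).symm

/-- Indicator delta. -/
noncomputable def dd {n : ℕ} (a b : Fin n) : ℝ := if a = b then 1 else 0

lemma w_apply (β : Idx n) (x y : Fin n) :
    w β x y = dd β.1.1 x * dd β.1.1 y + dd β.1.2 x * dd β.1.2 y
      - dd β.1.1 x * dd β.1.2 y - dd β.1.2 x * dd β.1.1 y := by
  simp [w, Matrix.single_apply, dd, ite_and]
  split_ifs <;> simp_all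

lemma sum_lt_symm (F : Fin n → Fin n → ℝ) (hs : ∀ k l, F k l = F l k)
    (hd : ∀ k, F k k = 0) :
    ∑ k : Fin n, ∑ l : Fin n, (if k < l then F k l else 0)
      = (1/2) * ∑ k : Fin n, ∑ l : Fin n, F k l := by
  have key : ∀ k l : Fin n, F k l
      = (if k < l then F k l else 0) + (if l < k then F k l else 0) := by
    intro k l
    rcases lt_trichotomy k l with h|h|h
    · simp [h, not_lt.mpr h.le]
    · simp [h, hd]
    · simp [h, not_lt.mpr h.le]
  have swap : ∑ k : Fin n, ∑ l : Fin n, (if l < k then F k l else 0)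
      = ∑ k : Fin n, ∑ l : Fin n, (if k < l then F k l else 0) := by
    rw [Finset.sum_comm]
    exact Finset.sum_congr rfl fun k _ => Finset.sum_congr rfl fun l _ => by rw [hs]
  have expand : ∑ k : Fin n, ∑ l : Fin n, F k l
      = ∑ k : Fin n, ∑ l : Fin n, ((if k < l then F k l else 0) + (if l < k then F k l else 0)) := by
    exact Finset.sum_congr rfl fun k _ => Finset.sum_congr rfl fun l _ => key k l
  simp only [Finset.sum_add_distrib] at expand
  rw [expand, swap]; ring

lemma L1 (hn : n ≠ 0) (α : Idx n) (x y : Fin n) :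
    ∑ β : Idx n, (-(v α β.1.1 β.1.2)) * w β x y = v α x y := by
  have hrow : ∀ k : Fin n, ∑ l, v α k l = 0 := v_rowsum hn α
  have hcol : ∀ l : Fin n, ∑ k, v α k l = 0 := by
    intro l
    rw [Finset.sum_congr rfl fun k _ => v_symm α k l]
    exact hrow l
  have hre : ∀ β : Idx n, (-(v α β.1.1 β.1.2)) * w β x y
      = (fun k l => (-(v α k l)) * (dd k x * dd k y + dd l x * dd l y
          - dd k x * dd l y - dd l x * dd k y)) β.1.1 β.1.2 := by
    intro β; rw [w_apply]
  rw [Finset.sum_congr rfl fun β _ => hre β,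
    sum_Idx (fun k l => (-(v α k l)) * (dd k x * dd k y + dd l x * dd l y
          - dd k x * dd l y - dd l x * dd k y)),
    sum_lt_symm]
  · simp only [mul_add, mul_sub, neg_mul, Finset.sum_add_distrib, Finset.sum_sub_distrib,
      Finset.sum_neg_distrib]
    have e1 : ∑ k : Fin n, ∑ l : Fin n, v α k l * (dd k x * dd k y) = 0 := by
      refine Finset.sum_eq_zero fun k _ => ?_
      rw [← Finset.sum_mul, hrow]; ring
    have e2 : ∑ k : Fin n, ∑ l : Fin n, v α k l * (dd l x * dd l y) = 0 := by
      rw [Finset.sum_comm]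
      refine Finset.sum_eq_zero fun l _ => ?_
      rw [← Finset.sum_mul, hcol]; ring
    have e3 : ∑ k : Fin n, ∑ l : Fin n, v α k l * (dd k x * dd l y) = v α x y := by
      simp [dd, mul_ite, ite_mul, Finset.sum_ite_eq', Finset.sum_ite_eq]
    have e4 : ∑ k : Fin n, ∑ l : Fin n, v α k l * (dd l x * dd k y) = v α x y := by
      rw [v_symm]
      simp [dd, mul_ite, ite_mul, Finset.sum_ite_eq', Finset.sum_ite_eq]
    rw [e1, e2, e3, e4]; ring
  · intro k l; rw [v_symm]; ring
  · intro k; ring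

lemma v_delta (α β : Idx n) :
    v α β.1.1 β.1.1 + v α β.1.2 β.1.2 - v α β.1.1 β.1.2 - v α β.1.2 β.1.1
      = if α = β then 1 else 0 := by
  obtain ⟨⟨i,j⟩,hij⟩ := α
  obtain ⟨⟨k,l⟩,hkl⟩ := β
  simp only at hij hkl
  have hij' : i ≠ j := ne_of_lt hij
  have hkl' : k ≠ l := ne_of_lt hkl
  simp only [v_apply, Jcol_apply, Subtype.mk.injEq, Prod.mk.injEq]
  by_cases h1 : k = i <;> by_cases h2 : l = j <;> by_cases h3 : k = j <;> by_cases h4 : l = i <;>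
    simp_all <;> try ring
  · rw [if_neg (fun h => h2 h.symm)]
  · rw [if_neg (fun h => h1 h.symm)]
  · exact absurd (hij.trans hkl) (lt_irrefl _)
  · rw [if_neg (fun h => h1 h.1.symm)]
  · exact fun h => absurd h.symm h1

lemma trace_std (A : Matrix (Fin n) (Fin n) ℝ) (i j : Fin n) :
    (Aᵀ * Matrix.single i j (1:ℝ)).trace = A i j := by
  simp [Matrix.trace, Matrix.diag, Matrix.mul_apply, Matrix.single_apply, ite_and,
    Finset.sum_ite_eq, Finset.sum_ite_eq']

lemma trace_w (A : Matrix (Fin n) (Fin n) ℝ) (β : Idx n) :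
    (Aᵀ * w β).trace = A β.1.1 β.1.1 + A β.1.2 β.1.2 - A β.1.1 β.1.2 - A β.1.2 β.1.1 := by
  simp only [w, Matrix.mul_add, Matrix.mul_sub, trace_add, trace_sub, trace_std]

/-- The candidate inverse of `H`. -/
noncomputable def Cmat {n : ℕ} (α β : Idx n) : ℝ := -(v α β.1.1 β.1.2)

lemma CH (hn : n ≠ 0) : (Matrix.of fun α β : Idx n => Cmat α β) * H n = 1 := by
  ext α β
  rw [Matrix.mul_apply]
  have : ∀ γ : Idx n, (Matrix.of fun α β : Idx n => Cmat α β) α γ * H n γ β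
      = Cmat α γ * (w γ β.1.1 β.1.1 + w γ β.1.2 β.1.2 - w γ β.1.1 β.1.2 - w γ β.1.2 β.1.1) := by
    intro γ
    rw [Matrix.of_apply, H, Matrix.of_apply, trace_w]
  rw [Finset.sum_congr rfl fun γ _ => this γ]
  simp only [mul_add, mul_sub, Finset.sum_add_distrib, Finset.sum_sub_distrib]
  have key : ∀ x y : Fin n, ∑ γ : Idx n, Cmat α γ * w γ x y = v α x y := fun x y => L1 hn α x y
  rw [key, key, key, key, v_delta α β, Matrix.one_apply]

end Aux

/-- The dyadic form of the dual basis agrees with the definition via `H⁻¹`: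
`v_α = Σ_β [H⁻¹]_{α,β} w_β`. -/
theorem stmt6 {n : ℕ} (hn : 2 ≤ n) (α : Idx n) :
    v α = ∑ β : Idx n, ((H n)⁻¹ α β) • w β := by
  have hn0 : n ≠ 0 := by omega
  have hinv : (H n)⁻¹ = Matrix.of fun α β : Idx n => Cmat α β :=
    Matrix.inv_eq_left_inv (CH hn0)
  rw [hinv]
  ext x y
  rw [Matrix.sum_apply]
  simp only [Matrix.smul_apply, smul_eq_mul, Matrix.of_apply]
  exact (L1 hn0 α x y).symm
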